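/- Let A be an N×k array with entries in the set {1,...,s} (s ≥ 1, k ≥ 1), and let a > b > 0 be real numbers. Then (1/N²)·Σ_{t=1}^{k} Unb_{2,t}(A)·(a−b)^t·b^{k−t} = −((a−b)/s + b)^k + (b^k/N²)·Σ_{1 ≤ r, r̃ ≤ N} (a/b)^{H(A;r,r̃)}, where the last sum ranges over all ordered pairs of row indices (including r = r̃) and H(A;r,r̃) := #{j ∈ {1,...,k} : A_{r,j} = A_{r̃,j}} is the Hamming similarity. (Both sides equal the squared discrete discrepancy DD(A;a,b)².) -/

import Mathlib

open Finset

noncomputable section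

instance {t k : ℕ} : DecidablePred (StrictMono : (Fin t → Fin k) → Prop) := fun f =>
  decidable_of_iff (∀ a b : Fin t, a < b → f a < f b) Iff.rfl

/-- The number of rows of the array `A` whose restriction to the columns
`j 0, …, j (t-1)` equals the tuple `x`. -/
def rowCount {S : Type*} [DecidableEq S] {N k t : ℕ} (A : Fin N → Fin k → S)
    (x : Fin t → S) (j : Fin t → Fin k) : ℕ :=
  (Finset.univ.filter fun i : Fin N => ∀ r, A i (j r) = x r).card

/-- `A` is an orthogonal array with `s` levels and strength `t`. -/
def IsOA {S : Type*} [DecidableEq S] (s t : ℕ) {N k : ℕ} (A : Fin N → Fin k → S) : Prop :=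
  ∀ (x : Fin t → S) (j : Fin t → Fin k), StrictMono j →
    (rowCount A x j : ℝ) = (N : ℝ) / (s : ℝ) ^ t

/-- The `p`-unbalance of strength `t` of `A` (with `s` levels). -/
def Unb {S : Type*} [Fintype S] [DecidableEq S] (s : ℕ) (p : ℝ) (t : ℕ) {N k : ℕ}
    (A : Fin N → Fin k → S) : ℝ :=
  ∑ x : Fin t → S, ∑ j ∈ Finset.univ.filter (fun j : Fin t → Fin k => StrictMono j),
    |(rowCount A x j : ℝ) - (N : ℝ) / (s : ℝ) ^ t| ^ p

/-- The tolerance of strength `t` of `A` (with `s` levels). -/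
def Tol {S : Type*} [DecidableEq S] (s t : ℕ) {N k : ℕ} (A : Fin N → Fin k → S) : ℝ :=
  ⨆ (x : Fin t → S) (j : {j : Fin t → Fin k // StrictMono j}),
    |(rowCount A x j.1 : ℝ) - (N : ℝ) / (s : ℝ) ^ t|

/-- The Hamming similarity between the rows `r` and `r'` of `A`. -/
def Ham {S : Type*} [DecidableEq S] {N k : ℕ} (A : Fin N → Fin k → S) (r r' : Fin N) : ℕ :=
  (Finset.univ.filter fun j : Fin k => A r j = A r' j).card

/-- The matrix `X(A,f)`. -/
def Xmat {S : Type*} {N k : ℕ} (f : S → ℝ) (A : Fin N → Fin k → S) :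
    Matrix (Fin N) (Fin k) ℝ :=
  Matrix.of fun i j => f (A i j) / Real.sqrt (∑ i' : Fin N, f (A i' j) ^ 2)

/-- The absolute deviation of `f` with respect to the uniform measure. -/
def sigma1 {S : Type*} [Fintype S] (s : ℕ) (f : S → ℝ) : ℝ :=
  ⨅ α : ℝ, (∑ x : S, |f x - α|) / s

/-- The typical deviation of `f` with respect to the uniform measure. -/
def sigma2 {S : Type*} [Fintype S] (s : ℕ) (f : S → ℝ) : ℝ :=
  ⨅ α : ℝ, Real.sqrt ((∑ x : S, |f x - α| ^ 2) / s)
end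

section myAux

lemma aux_card_sm {k : ℕ} (D : Finset (Fin k)) (t : ℕ) :
    (Finset.univ.filter fun j : Fin t → Fin k => StrictMono j ∧ ∀ u, j u ∈ D).card
      = D.card.choose t := by
  rw [← Finset.card_powersetCard t D]
  apply Finset.card_bij (fun j _ => Finset.image j Finset.univ)
  · intro j hj
    simp only [Finset.mem_filter, Finset.mem_univ, true_and] at hj
    rw [Finset.mem_powersetCard]
    constructor
    · intro x hx; rcases Finset.mem_image.1 hx with ⟨u, _, rfl⟩; exact hj.2 u
    · rw [Finset.card_image_of_injective _ hj.1.injective, Finset.card_univ, Fintype.card_fin]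
  · intro j1 h1 j2 h2 he
    simp only [Finset.mem_filter, Finset.mem_univ, true_and] at h1 h2
    have hc : (Finset.image j1 Finset.univ).card = t := by
      rw [Finset.card_image_of_injective _ h1.1.injective, Finset.card_univ, Fintype.card_fin]
    have e1 := Finset.orderEmbOfFin_unique hc (f := j1)
      (fun x => Finset.mem_image_of_mem _ (Finset.mem_univ x)) h1.1
    have e2 := Finset.orderEmbOfFin_unique hc (f := j2)
      (fun x => by rw [he]; exact Finset.mem_image_of_mem _ (Finset.mem_univ x)) h2.1
    exact e1.trans e2.symm
  · intro T hT
    rw [Finset.mem_powersetCard] at hT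
    obtain ⟨hsub, hcard⟩ := hT
    refine ⟨T.orderEmbOfFin hcard, ?_, ?_⟩
    · simp only [Finset.mem_filter, Finset.mem_univ, true_and]
      exact ⟨(T.orderEmbOfFin hcard).strictMono, fun u => hsub (Finset.orderEmbOfFin_mem T hcard u)⟩
    · apply Finset.eq_of_subset_of_card_le
      · intro x hx; rcases Finset.mem_image.1 hx with ⟨u, _, rfl⟩
        exact Finset.orderEmbOfFin_mem T hcard u
      · rw [Finset.card_image_of_injective _ (T.orderEmbOfFin hcard).injective,
          Finset.card_univ, Fintype.card_fin, hcard]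

lemma aux_sum_rowCount {s N k t : ℕ} (A : Fin N → Fin k → Fin s) (j : Fin t → Fin k) :
    ∑ x : Fin t → Fin s, rowCount A x j = N := by
  unfold rowCount
  simp_rw [Finset.card_filter]
  rw [Finset.sum_comm]
  have h : ∀ i : Fin N, (∑ x : Fin t → Fin s, if ∀ r, A i (j r) = x r then 1 else 0) = 1 := by
    intro i
    rw [Finset.sum_eq_single (fun r => A i (j r))]
    · simp
    · intro x _ hx; rw [if_neg]; intro h; exact hx (funext fun r => (h r).symm)
    · simp
  simp [h]

lemma aux_sum_rowCount_sq {s N k t : ℕ} (A : Fin N → Fin k → Fin s) (j : Fin t → Fin k) :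
    ∑ x : Fin t → Fin s, (rowCount A x j)^2
      = ∑ r : Fin N, ∑ r' : Fin N, if ∀ u, A r (j u) = A r' (j u) then 1 else 0 := by
  unfold rowCount
  have hrc : ∀ x : Fin t → Fin s,
      (Finset.univ.filter fun i : Fin N => ∀ r, A i (j r) = x r).card
        = ∑ i : Fin N, if (fun u => A i (j u)) = x then 1 else 0 := by
    intro x; rw [Finset.card_filter]
    refine Finset.sum_congr rfl fun i _ => if_congr funext_iff.symm rfl rfl
  calc ∑ x : Fin t → Fin s, ((Finset.univ.filter fun i : Fin N => ∀ r, A i (j r) = x r).card)^2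
      = ∑ x : Fin t → Fin s, ∑ r : Fin N, ∑ r' : Fin N,
          (if (fun u => A r (j u)) = x then 1 else 0) *
          (if (fun u => A r' (j u)) = x then 1 else 0) := by
        refine Finset.sum_congr rfl fun x _ => ?_
        rw [hrc, sq, Finset.sum_mul_sum]
    _ = ∑ r : Fin N, ∑ r' : Fin N, ∑ x : Fin t → Fin s,
          (if (fun u => A r (j u)) = x then 1 else 0) *
          (if (fun u => A r' (j u)) = x then 1 else 0) := by
        rw [Finset.sum_comm]
        exact Finset.sum_congr rfl fun r _ => Finset.sum_comm
    _ = ∑ r : Fin N, ∑ r' : Fin N, if ∀ u, A r (j u) = A r' (j u) then 1 else 0 := by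
        refine Finset.sum_congr rfl fun r _ => Finset.sum_congr rfl fun r' _ => ?_
        simp_rw [boole_mul]
        rw [Finset.sum_ite_eq]
        simp only [Finset.mem_univ, if_true]
        refine if_congr ?_ rfl rfl
        rw [funext_iff]
        exact ⟨fun h u => (h u).symm, fun h u => (h u).symm⟩

lemma aux_binom {b : ℝ} (hb : b ≠ 0) {H k : ℕ} (hH : H ≤ k) (c : ℝ) :
    ∑ t ∈ Finset.range (k+1), (H.choose t : ℝ) * c ^ t * b ^ (k - t)
      = b ^ k * ((c + b) / b) ^ H := by
  have h1 : ∑ t ∈ Finset.range (k+1), (H.choose t : ℝ) * c ^ t * b ^ (k - t)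
      = ∑ t ∈ Finset.range (H+1), (H.choose t : ℝ) * c ^ t * b ^ (k - t) := by
    symm
    apply Finset.sum_subset
    · intro x hx; simp only [Finset.mem_range] at *; omega
    · intro x _ hx2
      simp only [Finset.mem_range] at hx2
      rw [Nat.choose_eq_zero_of_lt (by omega)]
      simp
  have h2 : ∀ t ∈ Finset.range (H+1),
      (H.choose t : ℝ) * c^t * b^(k-t) = b^(k-H) * (c^t * b^(H-t) * (H.choose t : ℝ)) := by
    intro t ht
    simp only [Finset.mem_range] at ht
    rw [show k - t = (k - H) + (H - t) by omega, pow_add]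
    ring
  rw [h1, Finset.sum_congr rfl h2, ← Finset.mul_sum, ← add_pow, div_pow]
  rw [show k = (k - H) + H by omega, pow_add]
  field_simp
  simp only [Nat.add_sub_cancel]
  ring

lemma aux_unb {s N k : ℕ} (hs : 1 ≤ s) (A : Fin N → Fin k → Fin s) (t : ℕ) :
    Unb s 2 t A = (∑ r : Fin N, ∑ r' : Fin N, ((Ham A r r').choose t : ℝ))
      - (N:ℝ)^2 * (k.choose t) / (s:ℝ)^t := by
  classical
  have hs0 : (s:ℝ) ≠ 0 := Nat.cast_ne_zero.2 (by omega)
  have hst : (s:ℝ)^t ≠ 0 := pow_ne_zero _ hs0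
  set SM := Finset.univ.filter (StrictMono : (Fin t → Fin k) → Prop) with hSM
  set c : ℝ := (N : ℝ) / (s:ℝ)^t with hc
  have habs : ∀ y : ℝ, |y| ^ (2:ℝ) = y^2 := by
    intro y
    rw [show (2:ℝ) = ((2:ℕ):ℝ) by norm_num, Real.rpow_natCast, sq_abs]
  have hSMcard : SM.card = k.choose t := by
    have h := aux_card_sm (Finset.univ : Finset (Fin k)) t
    rw [Finset.card_univ, Fintype.card_fin] at h
    rw [← h, hSM]
    congr 1
    apply Finset.filter_congr
    intro j _
    simp
  have hA : ∑ x : Fin t → Fin s, ∑ j ∈ SM, ((rowCount A x j : ℝ))^2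
      = ∑ r : Fin N, ∑ r' : Fin N, ((Ham A r r').choose t : ℝ) := by
    have inner : ∀ j : Fin t → Fin k, ∑ x : Fin t → Fin s, ((rowCount A x j : ℝ))^2
        = ∑ r : Fin N, ∑ r' : Fin N, if ∀ u, A r (j u) = A r' (j u) then (1:ℝ) else 0 := by
      intro j
      have h := aux_sum_rowCount_sq A j
      calc ∑ x : Fin t → Fin s, ((rowCount A x j : ℝ))^2
          = ((∑ x : Fin t → Fin s, (rowCount A x j)^2 : ℕ) : ℝ) := by push_cast; rfl
        _ = ((∑ r : Fin N, ∑ r' : Fin N,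
              if ∀ u, A r (j u) = A r' (j u) then 1 else 0 : ℕ) : ℝ) := by rw [h]
        _ = _ := by push_cast [apply_ite (Nat.cast : ℕ → ℝ)]; rfl
    rw [Finset.sum_comm]
    simp_rw [inner]
    rw [Finset.sum_comm]
    refine Finset.sum_congr rfl fun r _ => ?_
    rw [Finset.sum_comm]
    refine Finset.sum_congr rfl fun r' _ => ?_
    rw [Finset.sum_boole]
    have : SM.filter (fun j : Fin t → Fin k => ∀ u, A r (j u) = A r' (j u))
        = Finset.univ.filter fun j : Fin t → Fin k =>
            StrictMono j ∧ ∀ u, j u ∈ (Finset.univ.filter fun c : Fin k => A r c = A r' c) := by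
      rw [hSM, Finset.filter_filter]
      apply Finset.filter_congr
      intro j _
      simp
    rw [this, aux_card_sm]
    rfl
  have hB : ∑ x : Fin t → Fin s, ∑ j ∈ SM, (rowCount A x j : ℝ) = (k.choose t : ℝ) * N := by
    rw [Finset.sum_comm]
    have inner : ∀ j : Fin t → Fin k, ∑ x : Fin t → Fin s, (rowCount A x j : ℝ) = (N : ℝ) := by
      intro j
      exact_mod_cast congrArg (Nat.cast (R := ℝ)) (aux_sum_rowCount A j)
    simp_rw [inner]
    rw [Finset.sum_const, hSMcard, nsmul_eq_mul]
  have hC : ∑ x : Fin t → Fin s, ∑ j ∈ SM, (c^2) = (s:ℝ)^t * (k.choose t) * c^2 := by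
    rw [Finset.sum_const, Finset.sum_const, hSMcard, Finset.card_univ]
    simp only [nsmul_eq_mul, smul_eq_mul]
    rw [Fintype.card_fun, Fintype.card_fin, Fintype.card_fin]
    push_cast
    ring
  calc Unb s 2 t A
      = ∑ x : Fin t → Fin s, ∑ j ∈ SM,
          ((rowCount A x j:ℝ)^2 - 2*c*(rowCount A x j:ℝ) + c^2) := by
        unfold Unb
        exact Finset.sum_congr rfl fun x _ => Finset.sum_congr rfl fun j _ => by
          rw [habs]; ring
    _ = (∑ x : Fin t → Fin s, ∑ j ∈ SM, ((rowCount A x j:ℝ))^2)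
        - 2*c*(∑ x : Fin t → Fin s, ∑ j ∈ SM, (rowCount A x j:ℝ))
        + (∑ x : Fin t → Fin s, ∑ j ∈ SM, (c^2)) := by
        simp only [Finset.sum_add_distrib, Finset.sum_sub_distrib, ← Finset.mul_sum]
    _ = (∑ r : Fin N, ∑ r' : Fin N, ((Ham A r r').choose t : ℝ))
        - 2*c*((k.choose t : ℝ) * N) + (s:ℝ)^t * (k.choose t) * c^2 := by
        rw [hA, hB, hC]
    _ = _ := by
        rw [hc]
        field_simp
        ring

end myAux

/-- Identity between the generating sum of the `2`-unbalances of all strengths and the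
Hamming-similarity sum (both sides equal the squared discrete discrepancy `DD(A;a,b)²`). -/
theorem statement13 {s N k : ℕ} (hs : 1 ≤ s) (hk : 1 ≤ k) (hN : 0 < N)
    {a b : ℝ} (hb : 0 < b) (hab : b < a)
    (A : Fin N → Fin k → Fin s) :
    (1 / (N : ℝ) ^ 2) * ∑ t ∈ Finset.Icc 1 k, Unb s 2 t A * (a - b) ^ t * b ^ (k - t) =
      -(((a - b) / (s : ℝ) + b) ^ k) +
        ((b ^ k) / (N : ℝ) ^ 2) * ∑ r : Fin N, ∑ r' : Fin N, (a / b) ^ (Ham A r r') := by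
  classical
  have hb0 : b ≠ 0 := ne_of_gt hb
  have hN0 : (N:ℝ) ≠ 0 := Nat.cast_ne_zero.2 hN.ne'
  have hs0 : (s:ℝ) ≠ 0 := Nat.cast_ne_zero.2 (by omega)
  have hHam : ∀ r r' : Fin N, Ham A r r' ≤ k := by
    intro r r'
    calc Ham A r r' ≤ (Finset.univ : Finset (Fin k)).card := Finset.card_filter_le _ _
      _ = k := by simp
  -- extend the sum to t = 0 (the t = 0 term vanishes)
  have hzero : Unb s 2 0 A * (a - b) ^ 0 * b ^ (k - 0) = 0 := by
    rw [aux_unb hs A 0]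
    have h1 : (∑ r : Fin N, ∑ r' : Fin N, ((Ham A r r').choose 0 : ℝ)) = (N:ℝ)^2 := by
      simp [Finset.sum_const, Finset.card_univ, sq]
    rw [h1]
    norm_num
  have hIcc : ∑ t ∈ Finset.Icc 1 k, Unb s 2 t A * (a - b) ^ t * b ^ (k - t)
      = ∑ t ∈ Finset.range (k+1), Unb s 2 t A * (a - b) ^ t * b ^ (k - t) := by
    have hset : Finset.Icc 1 k = (Finset.range (k+1)).erase 0 := by
      ext x
      simp only [Finset.mem_Icc, Finset.mem_erase, Finset.mem_range]
      omega
    rw [hset]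
    exact Finset.sum_erase _ (f := fun t => Unb s 2 t A * (a - b) ^ t * b ^ (k - t)) hzero
  rw [hIcc]
  have expand : ∑ t ∈ Finset.range (k+1), Unb s 2 t A * (a - b) ^ t * b ^ (k - t)
      = (∑ r : Fin N, ∑ r' : Fin N, ∑ t ∈ Finset.range (k+1),
          ((Ham A r r').choose t : ℝ) * (a-b)^t * b^(k-t))
        - (N:ℝ)^2 * ∑ t ∈ Finset.range (k+1),
            (k.choose t : ℝ) * ((a-b)/s)^t * b^(k-t) := by
    have step : ∀ t ∈ Finset.range (k+1), Unb s 2 t A * (a - b) ^ t * b ^ (k - t)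
        = (∑ r : Fin N, ∑ r' : Fin N, ((Ham A r r').choose t : ℝ) * (a-b)^t * b^(k-t))
          - (N:ℝ)^2 * ((k.choose t : ℝ) * ((a-b)/s)^t * b^(k-t)) := by
      intro t _
      rw [aux_unb hs A t, div_pow, sub_mul, sub_mul]
      simp only [Finset.sum_mul]
      congr 1
      field_simp
    rw [Finset.sum_congr rfl step, Finset.sum_sub_distrib, ← Finset.mul_sum]
    congr 1
    rw [Finset.sum_comm]
    exact Finset.sum_congr rfl fun r _ => Finset.sum_comm
  rw [expand]
  have binom1 : ∀ r r' : Fin N, ∑ t ∈ Finset.range (k+1),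
      ((Ham A r r').choose t : ℝ) * (a-b)^t * b^(k-t) = b^k * (a/b)^(Ham A r r') := by
    intro r r'
    rw [aux_binom hb0 (hHam r r') (a - b)]
    congr 2
    ring
  have binom2 : ∑ t ∈ Finset.range (k+1),
      (k.choose t : ℝ) * ((a-b)/s)^t * b^(k-t) = ((a-b)/s + b)^k := by
    rw [aux_binom hb0 (le_refl k) ((a-b)/s)]
    rw [div_pow, mul_div_assoc']
    rw [mul_comm (b^k), mul_div_assoc, div_self (pow_ne_zero _ hb0), mul_one]
  simp_rw [binom1, binom2]
  have pull : ∑ r : Fin N, ∑ r' : Fin N, b ^ k * (a / b) ^ Ham A r r'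
      = b ^ k * ∑ r : Fin N, ∑ r' : Fin N, (a / b) ^ Ham A r r' := by
    rw [Finset.mul_sum]
    exact Finset.sum_congr rfl fun r _ => (Finset.mul_sum _ _ _).symm
  rw [pull]
  field_simp
  ring
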